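/- Let w(x) := φ_X(x)ᵀ Σ_X⁻¹ ψ. Then: (i) ⟨w, φ_Xᵀθ⟩_μ = ψᵀθ for every θ ∈ ℝ^d, and w is the unique element of H_X := {x ↦ φ_X(x)ᵀθ : θ ∈ ℝ^d} with this representing property; (ii) ‖w‖_μ² = ψᵀ Σ_X⁻¹ ψ; (iii) the propagated functional Λ'(g) := Σ_{x∈X} μ(x)·w(x)·(Pg)(x) satisfies Λ'(φ_Yᵀθ) = (Bψ)ᵀθ for every θ ∈ ℝ^d, where B := (Σ^{cr})ᵀ Σ_X⁻¹; consequently the representer of Λ' in H_Y := {y ↦ φ_Y(y)ᵀθ : θ ∈ ℝ^d} with respect to ⟨·,·⟩_ν is y ↦ φ_Y(y)ᵀ Σ_Y⁻¹ (Bψ). -/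
import Mathlib


open Matrix Finset

lemma sum_dot_dot {X : Type*} [Fintype X] {d : ℕ} (c : X → ℝ) (f g : X → Fin d → ℝ)
    (a b : Fin d → ℝ) :
    ∑ x, c x * (f x ⬝ᵥ a) * (g x ⬝ᵥ b) = a ⬝ᵥ (∑ x, c x • vecMulVec (f x) (g x)) *ᵥ b := by
  simp only [dotProduct, mulVec, Matrix.sum_apply, Matrix.smul_apply, vecMulVec_apply,
    smul_eq_mul, Finset.sum_mul, Finset.mul_sum]
  rw [Finset.sum_comm]
  conv_rhs => rw [Finset.sum_comm]
  refine Finset.sum_congr rfl fun j _ => ?_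
  rw [Finset.sum_comm]
  exact Finset.sum_congr rfl fun i _ => Finset.sum_congr rfl fun x _ => by ring

lemma sum_vmv_symm {X : Type*} [Fintype X] {d : ℕ} (c : X → ℝ) (f : X → Fin d → ℝ) :
    (∑ x, c x • vecMulVec (f x) (f x))ᵀ = ∑ x, c x • vecMulVec (f x) (f x) := by
  ext i j
  simp only [transpose_apply, Matrix.sum_apply, Matrix.smul_apply, vecMulVec_apply,
    smul_eq_mul]
  exact Finset.sum_congr rfl fun x _ => by ring

lemma sum_mul_dot {Y : Type*} [Fintype Y] {d : ℕ} (c : Y → ℝ) (f : Y → Fin d → ℝ)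
    (θ : Fin d → ℝ) :
    ∑ y, c y * (f y ⬝ᵥ θ) = (fun j => ∑ y, c y * f y j) ⬝ᵥ θ := by
  simp only [dotProduct, Finset.mul_sum, Finset.sum_mul]
  rw [Finset.sum_comm]
  exact Finset.sum_congr rfl fun j _ => Finset.sum_congr rfl fun y _ => by ring

/-- linear forms of the representers: with `w(x) := φ_X(x)ᵀ Σ_X⁻¹ ψ`:
(i) `⟨w, φ_Xᵀθ⟩_μ = ψᵀθ` for all `θ`, and `w` is the unique element of
`H_X = {x ↦ φ_X(x)ᵀθ}` with this property; (ii) `‖w‖_μ² = ψᵀ Σ_X⁻¹ ψ`;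
(iii) the propagated functional `Λ'(g) := Σₓ μ(x) w(x) (Pg)(x)` satisfies
`Λ'(φ_Yᵀθ) = (Bψ)ᵀθ` with `B = (Σ^{cr})ᵀ Σ_X⁻¹`, so its representer in `H_Y`
is `y ↦ φ_Y(y)ᵀ Σ_Y⁻¹ (Bψ)`. -/
theorem stmt_11 {X Y : Type*} [Fintype X] [Fintype Y] (d : ℕ)
    (μ : X → ℝ) (ν : Y → ℝ)
    (hμ0 : ∀ x, 0 ≤ μ x) (hμ1 : ∑ x, μ x = 1)
    (hν0 : ∀ y, 0 ≤ ν y) (hν1 : ∑ y, ν y = 1)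
    (φX : X → Fin d → ℝ) (φY : Y → Fin d → ℝ)
    (SX SY : Matrix (Fin d) (Fin d) ℝ)
    (hSX : SX = ∑ x, μ x • vecMulVec (φX x) (φX x))
    (hSY : SY = ∑ y, ν y • vecMulVec (φY y) (φY y))
    (hXinv : IsUnit SX.det) (hYinv : IsUnit SY.det)
    (P : X → Y → ℝ) (hP0 : ∀ x y, 0 ≤ P x y) (hP1 : ∀ x, ∑ y, P x y = 1)
    (Scr : Matrix (Fin d) (Fin d) ℝ)
    (hScr : Scr = ∑ x, μ x • vecMulVec (φX x) (fun j => ∑ y, P x y * φY y j))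
    (ψ : Fin d → ℝ)
    (w : X → ℝ) (hw : ∀ x, w x = φX x ⬝ᵥ SX⁻¹ *ᵥ ψ)
    (B : Matrix (Fin d) (Fin d) ℝ) (hB : B = Scrᵀ * SX⁻¹)
    (Lam : (Y → ℝ) → ℝ)
    (hLam : ∀ gf, Lam gf = ∑ x, μ x * w x * ∑ y, P x y * gf y) :
    ((∀ θ : Fin d → ℝ, ∑ x, μ x * w x * (φX x ⬝ᵥ θ) = ψ ⬝ᵥ θ) ∧
      (∃ θ', w = fun x => φX x ⬝ᵥ θ') ∧
      ∀ w' : X → ℝ, (∃ θ', w' = fun x => φX x ⬝ᵥ θ') →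
        (∀ θ : Fin d → ℝ, ∑ x, μ x * w' x * (φX x ⬝ᵥ θ) = ψ ⬝ᵥ θ) → w' = w) ∧
    (∑ x, μ x * w x ^ 2 = ψ ⬝ᵥ SX⁻¹ *ᵥ ψ) ∧
    ((∀ θ : Fin d → ℝ, Lam (fun y => φY y ⬝ᵥ θ) = (B *ᵥ ψ) ⬝ᵥ θ) ∧
      ∀ θ : Fin d → ℝ,
        ∑ y, ν y * (φY y ⬝ᵥ SY⁻¹ *ᵥ (B *ᵥ ψ)) * (φY y ⬝ᵥ θ) =
          Lam (fun y => φY y ⬝ᵥ θ)) := by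
  have hSXsym : SXᵀ = SX := by rw [hSX]; exact sum_vmv_symm _ _
  have hSYsym : SYᵀ = SY := by rw [hSY]; exact sum_vmv_symm _ _
  have hXmul : SX * SX⁻¹ = 1 := Matrix.mul_nonsing_inv SX hXinv
  have hYmul : SY * SY⁻¹ = 1 := Matrix.mul_nonsing_inv SY hYinv
  set u : Fin d → ℝ := SX⁻¹ *ᵥ ψ with hu
  have hSXu : SX *ᵥ u = ψ := by
    rw [hu, Matrix.mulVec_mulVec, hXmul, Matrix.one_mulVec]
  -- key quadratic-form identity on X
  have keyX : ∀ a b : Fin d → ℝ,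
      ∑ x, μ x * (φX x ⬝ᵥ a) * (φX x ⬝ᵥ b) = a ⬝ᵥ SX *ᵥ b := by
    intro a b; rw [hSX]; exact sum_dot_dot μ φX φX a b
  have keyY : ∀ a b : Fin d → ℝ,
      ∑ y, ν y * (φY y ⬝ᵥ a) * (φY y ⬝ᵥ b) = a ⬝ᵥ SY *ᵥ b := by
    intro a b; rw [hSY]; exact sum_dot_dot ν φY φY a b
  have dot_symm : ∀ (M : Matrix (Fin d) (Fin d) ℝ) (a b : Fin d → ℝ),
      a ⬝ᵥ M *ᵥ b = (Mᵀ *ᵥ a) ⬝ᵥ b := by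
    intro M a b
    rw [Matrix.dotProduct_mulVec, Matrix.mulVec_transpose]
  have rep : ∀ θ : Fin d → ℝ, ∑ x, μ x * w x * (φX x ⬝ᵥ θ) = ψ ⬝ᵥ θ := by
    intro θ
    have : ∑ x, μ x * w x * (φX x ⬝ᵥ θ) = ∑ x, μ x * (φX x ⬝ᵥ u) * (φX x ⬝ᵥ θ) := by
      exact Finset.sum_congr rfl fun x _ => by rw [hw x]
    rw [this, keyX, dot_symm, hSXsym, hSXu]
  refine ⟨⟨rep, ⟨u, funext fun x => hw x⟩, ?_⟩, ?_, ?_, ?_⟩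
  · -- uniqueness
    rintro w' ⟨θ', rfl⟩ h'
    have hθ' : SX *ᵥ θ' = ψ := by
      funext i
      have := h' (Pi.single i 1)
      rw [keyX, dot_symm, hSXsym] at this
      simpa [dotProduct_single] using this
    have : θ' = u := by
      rw [hu, ← hθ', Matrix.mulVec_mulVec, Matrix.nonsing_inv_mul SX hXinv,
        Matrix.one_mulVec]
    funext x; rw [this, hw x]
  · -- norm identity
    have : ∑ x, μ x * w x ^ 2 = ∑ x, μ x * (φX x ⬝ᵥ u) * (φX x ⬝ᵥ u) := by
      exact Finset.sum_congr rfl fun x _ => by rw [hw x]; ring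
    rw [this, keyX, dot_symm, hSXsym, hSXu]
  · -- propagation
    intro θ
    rw [hLam]
    have step : ∀ x, μ x * w x * (∑ y, P x y * (φY y ⬝ᵥ θ))
        = μ x * (φX x ⬝ᵥ u) * ((fun j => ∑ y, P x y * φY y j) ⬝ᵥ θ) := by
      intro x; rw [hw x, sum_mul_dot]
    calc ∑ x, μ x * w x * ∑ y, P x y * (φY y ⬝ᵥ θ)
        = ∑ x, μ x * (φX x ⬝ᵥ u) * ((fun j => ∑ y, P x y * φY y j) ⬝ᵥ θ) :=
          Finset.sum_congr rfl fun x _ => step x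
      _ = u ⬝ᵥ Scr *ᵥ θ := by rw [hScr]; exact sum_dot_dot μ φX _ u θ
      _ = (B *ᵥ ψ) ⬝ᵥ θ := by
          rw [dot_symm, hB, ← Matrix.mulVec_mulVec]
  · -- representer in H_Y
    intro θ
    have hv : SY *ᵥ (SY⁻¹ *ᵥ (B *ᵥ ψ)) = B *ᵥ ψ := by
      rw [Matrix.mulVec_mulVec, hYmul, Matrix.one_mulVec]
    have : ∑ y, ν y * (φY y ⬝ᵥ SY⁻¹ *ᵥ (B *ᵥ ψ)) * (φY y ⬝ᵥ θ)
        = (B *ᵥ ψ) ⬝ᵥ θ := by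
      rw [keyY, dot_symm, hSYsym, hv]
    rw [this]
    -- Lam (fun y => φY y ⬝ᵥ θ) = (B *ᵥ ψ) ⬝ᵥ θ : reuse propagation
    rw [hLam]
    have step : ∀ x, μ x * w x * (∑ y, P x y * (φY y ⬝ᵥ θ))
        = μ x * (φX x ⬝ᵥ u) * ((fun j => ∑ y, P x y * φY y j) ⬝ᵥ θ) := by
      intro x; rw [hw x, sum_mul_dot]
    rw [Finset.sum_congr rfl fun x _ => step x]
    rw [show (∑ x, μ x * (φX x ⬝ᵥ u) * ((fun j => ∑ y, P x y * φY y j) ⬝ᵥ θ))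
        = u ⬝ᵥ Scr *ᵥ θ from by rw [hScr]; exact sum_dot_dot μ φX _ u θ]
    rw [dot_symm, hB, ← Matrix.mulVec_mulVec]
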